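/- Strict positive realness is convex in the denominator: if c(s)/a(s) and c(s)/b(s) are both strictly positive real, then for every λ ∈ [0,1], c(s)/(λ a(s) + (1−λ) b(s)) is strictly positive real. -/

import Mathlib

open Polynomial Complex Filter Bornology Finset Topology

/-- A real polynomial is Hurwitz stable if all of its complex roots have
negative real part. -/
def Hurwitz (p : Polynomial ℝ) : Prop :=
  ∀ z : ℂ, (p.map (algebraMap ℝ ℂ)).IsRoot z → z.re < 0

/-- Evaluation of a real polynomial at the purely imaginary number `i ω`. -/
noncomputable def evalI (p : Polynomial ℝ) (ω : ℝ) : ℂ :=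
  Polynomial.aeval ((ω : ℂ) * Complex.I) p

/-- `c / q` is strictly positive real. -/
def SPR (c q : Polynomial ℝ) : Prop :=
  c.degree = q.degree ∧ Hurwitz q ∧ ∀ ω : ℝ, 0 < (evalI c ω / evalI q ω).re

noncomputable def cmap (p : Polynomial ℝ) : Polynomial ℂ := p.map (algebraMap ℝ ℂ)

-- upper bound on eval
lemma eval_norm_le (p : Polynomial ℂ) {z : ℂ} (hz : 1 ≤ ‖z‖) {m : ℕ} (hm : p.natDegree ≤ m) :
    ‖p.eval z‖ ≤ (∑ i ∈ Finset.range (p.natDegree + 1), ‖p.coeff i‖) * ‖z‖ ^ m := by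
  rw [eval_eq_sum_range, Finset.sum_mul]
  refine (norm_sum_le _ _).trans (Finset.sum_le_sum fun i hi => ?_)
  rw [norm_mul, norm_pow]
  have hi' : i ≤ m := le_trans (Nat.lt_succ_iff.mp (Finset.mem_range.mp hi)) hm
  exact mul_le_mul_of_nonneg_left (pow_le_pow_right₀ hz hi') (norm_nonneg _)

-- ratio of lower degree to monic tends to 0 at complex infinity
lemma ratio_tendsto_zero (A D : Polynomial ℂ) (hA : A.Monic) (hD : D.degree < A.degree) :
    Tendsto (fun z : ℂ => D.eval z / A.eval z) (comap norm atTop) (𝓝 0) := by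
  rcases eq_or_ne D 0 with rfl | hD0
  · simpa using tendsto_const_nhds
  set d := A.natDegree with hd
  have hDd : D.natDegree < d := natDegree_lt_natDegree hD0 hD
  have hdpos : 0 < d := lt_of_le_of_lt (Nat.zero_le _) hDd
  set E := A - X ^ d with hE
  have hAdeg : A.degree = (d : WithBot ℕ) := degree_eq_natDegree hA.ne_zero
  have hEdeg : E.degree < (d : WithBot ℕ) := by
    rw [← hAdeg]
    refine degree_sub_lt ?_ hA.ne_zero ?_
    · rw [degree_X_pow, hAdeg]
    · rw [hA.leadingCoeff, leadingCoeff_X_pow]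
  have hEd : E.natDegree ≤ d - 1 := by
    rcases eq_or_ne E 0 with h | h
    · simp [h]
    · exact Nat.le_sub_one_of_lt (natDegree_lt_natDegree h (hAdeg ▸ hEdeg))
  set SD := ∑ i ∈ Finset.range (D.natDegree + 1), ‖D.coeff i‖ with hSD
  set SE := ∑ i ∈ Finset.range (E.natDegree + 1), ‖E.coeff i‖ with hSE
  have hSDnn : 0 ≤ SD := Finset.sum_nonneg fun _ _ => norm_nonneg _
  have hSEnn : 0 ≤ SE := Finset.sum_nonneg fun _ _ => norm_nonneg _
  have hev : ∀ᶠ z : ℂ in comap norm atTop,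
      ‖D.eval z / A.eval z‖ ≤ 2 * SD / ‖z‖ := by
    filter_upwards [tendsto_comap.eventually_ge_atTop (1 : ℝ),
      tendsto_comap.eventually_ge_atTop (2 * SE + 2)] with z hz1 hz2
    have hzpos : (0:ℝ) < ‖z‖ := lt_of_lt_of_le one_pos hz1
    have hDb : ‖D.eval z‖ ≤ SD * ‖z‖ ^ (d - 1) :=
      eval_norm_le D hz1 (Nat.le_sub_one_of_lt hDd)
    have hEb : ‖E.eval z‖ ≤ SE * ‖z‖ ^ (d - 1) := eval_norm_le E hz1 hEd
    have hAz : A.eval z = z ^ d + E.eval z := by simp [hE]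
    have hpow : ‖z‖ ^ d = ‖z‖ ^ (d - 1) * ‖z‖ := by
      rw [← pow_succ]; congr 1; omega
    have hAlow : ‖z‖ ^ d / 2 ≤ ‖A.eval z‖ := by
      have h1 : ‖z‖ ^ d - ‖A.eval z‖ ≤ ‖E.eval z‖ := by
        calc ‖z‖ ^ d - ‖A.eval z‖ = ‖z ^ d‖ - ‖A.eval z‖ := by rw [norm_pow]
          _ ≤ ‖z ^ d - A.eval z‖ := norm_sub_norm_le _ _
          _ = ‖E.eval z‖ := by rw [hAz]; ring_nf; rw [norm_neg]
      have h2 : ‖E.eval z‖ ≤ ‖z‖ ^ d / 2 := by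
        have hSE2 : SE ≤ ‖z‖ / 2 := by linarith
        calc ‖E.eval z‖ ≤ SE * ‖z‖ ^ (d - 1) := hEb
          _ ≤ (‖z‖ / 2) * ‖z‖ ^ (d - 1) :=
              mul_le_mul_of_nonneg_right hSE2 (by positivity)
          _ = ‖z‖ ^ d / 2 := by rw [hpow]; ring
      linarith
    have hApos : (0:ℝ) < ‖A.eval z‖ := lt_of_lt_of_le (by positivity) hAlow
    rw [norm_div, div_le_div_iff₀ hApos hzpos]
    have h1 : ‖D.eval z‖ * ‖z‖ ≤ SD * ‖z‖ ^ (d - 1) * ‖z‖ :=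
      mul_le_mul_of_nonneg_right hDb hzpos.le
    have h2 : 2 * SD * (‖z‖ ^ d / 2) ≤ 2 * SD * ‖A.eval z‖ :=
      mul_le_mul_of_nonneg_left hAlow (by linarith)
    nlinarith [h1, h2, hpow]
  refine squeeze_zero_norm' hev ?_
  exact Tendsto.div_atTop tendsto_const_nhds tendsto_comap

lemma tendsto_ratio (A C : Polynomial ℂ) (hA : A.Monic) (hdeg : C.degree ≤ A.degree) :
    Tendsto (fun z : ℂ => C.eval z / A.eval z) (comap norm atTop)
      (𝓝 (C.coeff A.natDegree)) := by
  set d := A.natDegree with hd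
  set L := C.coeff d with hL
  rcases Nat.eq_zero_or_pos d with hd0 | hdpos
  · have hA1 : A = 1 := hA.natDegree_eq_zero.mp hd0
    have hC : C = Polynomial.C L := by
      have : L = C.coeff 0 := by rw [hL, hd0]
      rw [this]
      refine eq_C_of_degree_le_zero ?_
      rw [hA1] at hdeg; simpa using hdeg
    have hfun : (fun z : ℂ => C.eval z / A.eval z) = fun _ => L := by
      funext z; rw [hA1, hC]; simp
    rw [hfun]; exact tendsto_const_nhds
  · have hAdeg : A.degree = (d : WithBot ℕ) := degree_eq_natDegree hA.ne_zero
    set D := C - Polynomial.C L * A with hDdef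
    have hDdeg : D.degree < A.degree := by
      rw [hAdeg, degree_lt_iff_coeff_zero]
      intro m hm
      have hm' : d ≤ m := by exact_mod_cast hm
      rcases eq_or_lt_of_le hm' with h | h
      · simp only [hDdef, coeff_sub, coeff_C_mul, ← h, hA.coeff_natDegree, hL, mul_one,
          sub_self]
        rw [show A.coeff d = 1 from hA.coeff_natDegree, mul_one, sub_self]
      · have h1 : C.coeff m = 0 := coeff_eq_zero_of_degree_lt
          (lt_of_le_of_lt hdeg (by rw [hAdeg]; exact_mod_cast h))
        have h2 : A.coeff m = 0 := coeff_eq_zero_of_natDegree_lt h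
        simp [hDdef, coeff_C_mul, h1, h2]
    have h0 := ratio_tendsto_zero A D hA hDdeg
    have hev : ∀ᶠ z : ℂ in comap norm atTop,
        D.eval z / A.eval z + L = C.eval z / A.eval z := by
      have hnorm : Tendsto (fun z : ℂ => ‖A.eval z‖) (comap norm atTop) atTop :=
        A.tendsto_norm_atTop (by rw [hAdeg]; exact_mod_cast hdpos) tendsto_comap
      filter_upwards [hnorm.eventually_ge_atTop 1] with z hz
      have hAz : A.eval z ≠ 0 := by
        intro h; rw [h] at hz; simp at hz; linarith
      rw [hDdef]
      field_simp
      simp only [eval_sub, eval_mul, eval_C]; ring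
    have hadd := h0.add (tendsto_const_nhds (x := L))
    rw [zero_add] at hadd
    exact hadd.congr' hev

lemma evalI_eq (p : Polynomial ℝ) (ω : ℝ) : evalI p ω = (cmap p).eval ((ω : ℂ) * Complex.I) := by
  rw [evalI, cmap, aeval_def, eval₂_eq_eval_map]

lemma cmap_monic {p : Polynomial ℝ} (hp : p.Monic) : (cmap p).Monic :=
  hp.map _

lemma cmap_degree (p : Polynomial ℝ) : (cmap p).degree = p.degree :=
  degree_map p (algebraMap ℝ ℂ)

lemma interior_pos (a c : Polynomial ℝ) (haM : a.Monic) (hH : Hurwitz a)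
    (hdeg : c.degree = a.degree)
    (hfreq : ∀ ω : ℝ, 0 < (evalI c ω / evalI a ω).re) :
    ∀ z : ℂ, 0 ≤ z.re → 0 < ((cmap c).eval z / (cmap a).eval z).re := by
  set A := cmap a with hA
  set C := cmap c with hC
  have hAM : A.Monic := cmap_monic haM
  have hAne : ∀ z : ℂ, 0 ≤ z.re → A.eval z ≠ 0 := by
    intro z hz h
    exact absurd (hH z h) (not_lt.mpr hz)
  have hCdeg : C.degree ≤ A.degree := by rw [hA, hC, cmap_degree, cmap_degree, hdeg]
  have hfreq' : ∀ ω : ℝ, 0 < (C.eval ((ω:ℂ) * Complex.I) / A.eval ((ω:ℂ) * Complex.I)).re := by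
    intro ω
    have := hfreq ω
    rwa [evalI_eq, evalI_eq] at this
  set d := A.natDegree with hd
  set L := C.coeff d with hL
  have hT : Tendsto (fun z : ℂ => C.eval z / A.eval z) (comap norm atTop) (𝓝 L) :=
    tendsto_ratio A C hAM hCdeg
  -- L is real and positive
  have himag : Tendsto (fun ω : ℝ => (ω:ℂ) * Complex.I) atTop (comap norm atTop) := by
    rw [tendsto_comap_iff]
    have : (norm ∘ fun ω : ℝ => (ω:ℂ) * Complex.I) = fun ω : ℝ => |ω| := by
      funext ω; simp [Function.comp]
    rw [this]
    exact tendsto_abs_atTop_atTop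
  have hLre : 0 ≤ L.re := by
    have h2 := (Complex.continuous_re.tendsto L).comp (hT.comp himag)
    exact ge_of_tendsto h2 (Filter.Eventually.of_forall fun ω => (hfreq' ω).le)
  have hLne : L ≠ 0 := by
    have hcne : c ≠ 0 := by
      intro h
      rw [h, degree_zero] at hdeg
      exact haM.ne_zero (degree_eq_bot.mp hdeg.symm)
    have hdc : c.natDegree = d := by
      rw [hd, hA]
      have := natDegree_eq_of_degree_eq (p := c) (q := a) hdeg
      rw [this]
      exact (natDegree_map_eq_of_injective (algebraMap ℝ ℂ).injective a).symm
    have : L = (c.leadingCoeff : ℂ) := by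
      rw [hL, hC, cmap, coeff_map, leadingCoeff, hdc]
      simp [Complex.coe_algebraMap]
    rw [this]
    exact_mod_cast (mt leadingCoeff_eq_zero.mp hcne)
  have hLpos : 0 < L.re := lt_of_le_of_ne hLre (fun h => hLne (by
    have hLim : L.im = 0 := by
      have hdc : L = ((c.coeff d : ℝ) : ℂ) := by rw [hL, hC, cmap, coeff_map]; rfl
      rw [hdc]; simp
    exact Complex.ext (h.symm) hLim))
  -- positivity at large radius
  have hev : ∀ᶠ z : ℂ in comap norm atTop, 0 < (C.eval z / A.eval z).re :=
    hT.eventually ((isOpen_lt continuous_const Complex.continuous_re).mem_nhds hLpos)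
  rw [eventually_comap] at hev
  obtain ⟨R, hR⟩ := eventually_atTop.mp hev
  have hbig : ∀ z : ℂ, R ≤ ‖z‖ → 0 < (C.eval z / A.eval z).re := fun z hz =>
    hR ‖z‖ hz z rfl
  -- main argument
  intro z₀ hz₀
  rcases eq_or_lt_of_le hz₀ with h0 | hpos
  · have : z₀ = (z₀.im : ℂ) * Complex.I := by
      apply Complex.ext <;> simp [← h0]
    rw [this]
    exact hfreq' z₀.im
  · set R' := max R (‖z₀‖ + 1) with hR'
    have hR'pos : (0:ℝ) < R' := lt_of_lt_of_le (by positivity) (le_max_right _ _)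
    set U : Set ℂ := {z : ℂ | 0 < z.re} ∩ Metric.ball 0 R' with hU
    have hUopen : IsOpen U := ((isOpen_lt continuous_const Complex.continuous_re).inter
      Metric.isOpen_ball)
    have hUb : Bornology.IsBounded U := Metric.isBounded_ball.subset Set.inter_subset_right
    have hclU : closure U ⊆ {z : ℂ | 0 ≤ z.re} := by
      refine (closure_inter_subset_inter_closure _ _).trans ?_
      rw [Complex.closure_setOf_lt_re]
      exact Set.inter_subset_left
    set f : ℂ → ℂ := fun z => Complex.exp (-(C.eval z / A.eval z)) with hf
    have hdiff : DiffContOnCl ℂ f U := by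
      refine DifferentiableOn.diffContOnCl ?_
      have hV : DifferentiableOn ℂ f {z : ℂ | 0 ≤ z.re} := by
        refine DifferentiableOn.cexp ?_
        refine DifferentiableOn.neg ?_
        exact DifferentiableOn.div (C.differentiable.differentiableOn)
          (A.differentiable.differentiableOn) (fun z hz => hAne z hz)
      exact hV.mono hclU
    -- positivity on the frontier
    have hfr : ∀ w ∈ frontier U, 0 < (C.eval w / A.eval w).re := by
      intro w hw
      have := frontier_inter_subset {z : ℂ | 0 < z.re} (Metric.ball 0 R') hw
      rcases this with h | h
      · have hwre : w.re = 0 := by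
          have := h.1
          rwa [Complex.frontier_setOf_lt_re] at this
        have : w = (w.im : ℂ) * Complex.I := by apply Complex.ext <;> simp [hwre]
        rw [this]
        exact hfreq' w.im
      · have hwn : ‖w‖ = R' := by
          have := h.2
          rw [frontier_ball 0 (ne_of_gt hR'pos)] at this
          simpa [Complex.dist_eq] using this
        exact hbig w (by rw [hwn]; exact le_max_left _ _)
    -- compactness of the frontier, minimum
    have hfrcomp : IsCompact (frontier U) :=
      hUb.isCompact_closure.of_isClosed_subset isClosed_frontier frontier_subset_closure
    have hfrne : (frontier U).Nonempty := by
      refine ⟨0, ?_⟩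
      rw [frontier, hUopen.interior_eq]
      constructor
      · rw [Metric.mem_closure_iff]
        intro ε hε
        set x : ℝ := min ε R' / 2 with hx
        have hx0 : 0 < x := by positivity
        refine ⟨(x : ℂ), ⟨?_, ?_⟩, ?_⟩
        · simpa using hx0
        · rw [Metric.mem_ball, dist_zero_right]
          have hlt : x < R' := by
            have := min_le_right ε R'
            rw [hx]; linarith
          simpa [Complex.norm_real, abs_of_pos hx0] using hlt
        · rw [dist_comm, dist_zero_right]
          have hlt : x < ε := by
            have := min_le_left ε R'
            rw [hx]; linarith
          simpa [Complex.norm_real, abs_of_pos hx0] using hlt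
      · simp [hU]
    have hcont : ContinuousOn (fun w => (C.eval w / A.eval w).re) (frontier U) := by
      refine Complex.continuous_re.comp_continuousOn ?_
      refine ContinuousOn.div (C.continuous.continuousOn) (A.continuous.continuousOn) ?_
      intro w hw
      exact hAne w (hclU (frontier_subset_closure hw))
    obtain ⟨w₀, hw₀mem, hw₀min⟩ := hfrcomp.exists_isMinOn hfrne hcont
    set m := (C.eval w₀ / A.eval w₀).re with hm
    have hmpos : 0 < m := hfr w₀ hw₀mem
    have hbound : ∀ w ∈ frontier U, ‖f w‖ ≤ Real.exp (-m) := by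
      intro w hw
      rw [hf]
      simp only [Complex.norm_exp, Complex.neg_re]
      exact Real.exp_le_exp.mpr (neg_le_neg (hw₀min hw))
    have hz₀U : z₀ ∈ closure U := subset_closure ⟨hpos, by
      rw [Metric.mem_ball, dist_zero_right]
      exact lt_of_lt_of_le (lt_add_one _) (le_max_right _ _)⟩
    have hfinal := Complex.norm_le_of_forall_mem_frontier_norm_le hUb hdiff hbound hz₀U
    rw [hf] at hfinal
    simp only [Complex.norm_exp, Complex.neg_re] at hfinal
    have := Real.exp_le_exp.mp hfinal
    linarith

lemma re_inv_pos {z : ℂ} (h : 0 < z.re) : 0 < z⁻¹.re := by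
  have hz : z ≠ 0 := fun h0 => by simp [h0] at h
  rw [Complex.inv_re]
  exact div_pos h (Complex.normSq_pos.mpr hz)

lemma freq_pos {zA zB zC : ℂ} {μ : ℝ} (hμ0 : 0 ≤ μ) (hμ1 : μ ≤ 1)
    (hA : 0 < (zC / zA).re) (hB : 0 < (zC / zB).re) :
    0 < (zC / ((μ:ℂ) * zA + ((1-μ : ℝ):ℂ) * zB)).re := by
  have hwA : 0 < (zA / zC).re := by rw [← inv_div]; exact re_inv_pos hA
  have hwB : 0 < (zB / zC).re := by rw [← inv_div]; exact re_inv_pos hB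
  have hQ : 0 < ((((μ:ℂ) * zA + ((1-μ:ℝ):ℂ) * zB)) / zC).re := by
    rw [add_div, mul_div_assoc, mul_div_assoc, Complex.add_re]
    simp only [Complex.mul_re, Complex.ofReal_re, Complex.ofReal_im, zero_mul, sub_zero]
    nlinarith [hwA, hwB, mul_nonneg hμ0 hwA.le, mul_nonneg (by linarith : (0:ℝ) ≤ 1 - μ) hwB.le, mul_pos hwA (by norm_num : (0:ℝ) < 1), mul_le_mul_of_nonneg_left hwA.le hμ0]
  rw [← inv_div]
  exact re_inv_pos hQ

lemma key_mul_conj {w u : ℂ} (hu : u ≠ 0) (h : 0 < (w / u).re) :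
    0 < (w * (starRingEnd ℂ) u).re := by
  have h2 : w * (starRingEnd ℂ) u = (w / u) * ((Complex.normSq u : ℝ) : ℂ) := by
    rw [← Complex.mul_conj]
    field_simp
  rw [h2]
  simp only [Complex.mul_re, Complex.ofReal_re, Complex.ofReal_im, mul_zero, sub_zero]
  exact mul_pos h (Complex.normSq_pos.mpr hu)

theorem stmt_1 (n : ℕ) (a b c : Polynomial ℝ)
    (haM : a.Monic) (hbM : b.Monic)
    (hna : a.natDegree = n) (hnb : b.natDegree = n)
    (hca : SPR c a) (hcb : SPR c b) :
    ∀ μ : ℝ, μ ∈ Set.Icc (0 : ℝ) 1 → SPR c (μ • a + (1 - μ) • b) := by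
  intro μ hμ
  obtain ⟨hμ0, hμ1⟩ := hμ
  obtain ⟨hdca, hHa, hfa⟩ := hca
  obtain ⟨hdcb, hHb, hfb⟩ := hcb
  set q := μ • a + (1 - μ) • b with hq
  have hadeg : a.degree = (n : WithBot ℕ) := by
    rw [degree_eq_natDegree haM.ne_zero, hna]
  have hbdeg : b.degree = (n : WithBot ℕ) := by
    rw [degree_eq_natDegree hbM.ne_zero, hnb]
  have hqcoeff : q.coeff n = 1 := by
    rw [hq, coeff_add, coeff_smul, coeff_smul]
    have h1 : a.coeff n = 1 := by rw [← hna]; exact haM.coeff_natDegree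
    have h2 : b.coeff n = 1 := by rw [← hnb]; exact hbM.coeff_natDegree
    rw [h1, h2]
    simp
  have hqdeg : q.degree = (n : WithBot ℕ) := by
    refine le_antisymm ?_ (le_degree_of_ne_zero (by rw [hqcoeff]; norm_num))
    rw [hq]
    refine (degree_add_le _ _).trans (max_le ?_ ?_)
    · exact (degree_smul_le _ _).trans (le_of_eq hadeg)
    · exact (degree_smul_le _ _).trans (le_of_eq hbdeg)
  -- evalI of q
  have hqevalI : ∀ ω : ℝ, evalI q ω = (μ:ℂ) * evalI a ω + ((1-μ:ℝ):ℂ) * evalI b ω := by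
    intro ω
    rw [hq]
    simp only [evalI, map_add, map_smul, Complex.real_smul]
  refine ⟨?_, ?_, ?_⟩
  · rw [hdca, hadeg, hqdeg]
  · -- Hurwitz part
    intro z hroot
    by_contra hcon
    push_neg at hcon
    have hAz := interior_pos a c haM hHa hdca hfa z hcon
    have hBz := interior_pos b c hbM hHb hdcb hfb z hcon
    have hCne : (cmap c).eval z ≠ 0 := by
      intro h
      rw [h] at hAz
      simp at hAz
    have hroot' : (μ:ℂ) * (cmap a).eval z + ((1-μ:ℝ):ℂ) * (cmap b).eval z = 0 := by
      have : (cmap q).eval z = 0 := hroot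
      rw [hq] at this
      simpa only [cmap, Polynomial.map_add, smul_eq_C_mul, Polynomial.map_mul, map_C,
        eval_add, eval_mul, eval_C, Complex.coe_algebraMap] using this
    have hkA : 0 < ((cmap a).eval z * (starRingEnd ℂ) ((cmap c).eval z)).re := by
      refine key_mul_conj hCne ?_
      rw [← inv_div]
      exact re_inv_pos hAz
    have hkB : 0 < ((cmap b).eval z * (starRingEnd ℂ) ((cmap c).eval z)).re := by
      refine key_mul_conj hCne ?_
      rw [← inv_div]
      exact re_inv_pos hBz
    have hzero : (((μ:ℂ) * (cmap a).eval z + ((1-μ:ℝ):ℂ) * (cmap b).eval z)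
        * (starRingEnd ℂ) ((cmap c).eval z)).re = 0 := by
      rw [hroot', zero_mul, Complex.zero_re]
    rw [add_mul, Complex.add_re, mul_assoc, mul_assoc] at hzero
    simp only [Complex.mul_re, Complex.ofReal_re, Complex.ofReal_im, zero_mul, sub_zero]
      at hzero
    simp only [Complex.mul_re] at hkA hkB
    nlinarith [hkA, hkB, mul_nonneg hμ0 hkA.le,
      mul_nonneg (by linarith : (0:ℝ) ≤ 1 - μ) hkB.le]
  · -- frequency part
    intro ω
    rw [hqevalI ω]
    exact freq_pos hμ0 hμ1 (hfa ω) (hfb ω)
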